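/- Let b ∈ (0,1) and γ ∈ (0,1]. Then the quantity D := b·(log b)·√γ·J_1(√γ b) + J_0(√γ b) is strictly positive, and if A_0, C_0 ∈ ℝ satisfy the matching system A_0·J_0(√γ b) = 1 + C_0·log b and A_0·√γ·J_0'(√γ b) = C_0/b (where J_0' denotes the derivative of J_0), then C_0 = − b√γ·J_1(√γ b) / D. In particular the zeroth eigenvalue of the Dirichlet-to-Neumann map for the one-step radial potential q = γχ_{(0,b)}(|x|) on the unit disk equals c_0 = − b√γ J_1(√γ b) / ( b (log b) √γ J_1(√γ b) + J_0(√γ b) ). -/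

import Mathlib

open Real Set

open MeasureTheory intervalIntegral


-- sin '' Ioo = Ioo
lemma sin_image_Ioo : Real.sin '' Ioo (-(π/2)) (π/2) = Ioo (-1 : ℝ) 1 := by
  apply Subset.antisymm
  · rintro x ⟨θ, hθ, rfl⟩
    constructor
    · have := Real.strictMonoOn_sin (by constructor <;> simp [le_refl, pi_div_two_pos.le] : -(π/2) ∈ Icc (-(π/2)) (π/2)) (Ioo_subset_Icc_self hθ) hθ.1
      simpa using this
    · have := Real.strictMonoOn_sin (Ioo_subset_Icc_self hθ) (by constructor <;> simp [pi_div_two_pos.le] : (π/2) ∈ Icc (-(π/2)) (π/2)) hθ.2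
      simpa using this
  · have := intermediate_value_Ioo (a := -(π/2)) (b := π/2) (by linarith [pi_div_two_pos]) Real.continuous_sin.continuousOn
    simpa using this

lemma chgvar (n : ℕ) (r : ℝ) :
    (∫ t in (-1 : ℝ)..1, Real.cos (r * t) * (1 - t ^ 2) ^ ((n : ℝ) - 1 / 2)) =
    ∫ θ in (-(π/2))..(π/2), Real.cos (r * Real.sin θ) * Real.cos θ ^ (2 * n) := by
  have h1 : (-1 : ℝ) ≤ 1 := by norm_num
  have h2 : -(π/2) ≤ π/2 := by linarith [pi_div_two_pos]
  rw [intervalIntegral.integral_of_le h1, intervalIntegral.integral_of_le h2,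
    MeasureTheory.integral_Ioc_eq_integral_Ioo, MeasureTheory.integral_Ioc_eq_integral_Ioo,
    ← sin_image_Ioo]
  rw [MeasureTheory.integral_image_eq_integral_abs_deriv_smul measurableSet_Ioo
    (fun x _ => (Real.hasDerivAt_sin x).hasDerivWithinAt)
    (Real.injOn_sin.mono Ioo_subset_Icc_self)]
  apply MeasureTheory.setIntegral_congr_fun measurableSet_Ioo
  intro θ hθ
  have hc : 0 < Real.cos θ := Real.cos_pos_of_mem_Ioo hθ
  have hs : (1 : ℝ) - Real.sin θ ^ 2 = Real.cos θ ^ 2 := by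
    have := Real.sin_sq_add_cos_sq θ; linarith
  simp only [smul_eq_mul, abs_of_pos hc, hs]
  have key : Real.cos θ * (Real.cos θ ^ 2) ^ ((n : ℝ) - 1 / 2) = Real.cos θ ^ (2 * n) := by
    rw [← Real.rpow_natCast (Real.cos θ) 2, ← Real.rpow_natCast (Real.cos θ) (2 * n),
      ← Real.rpow_mul hc.le]
    nth_rewrite 1 [← Real.rpow_one (Real.cos θ)]
    rw [← Real.rpow_add hc]
    norm_num
    ring_nf
  calc Real.cos θ * (Real.cos (r * Real.sin θ) * (Real.cos θ ^ 2) ^ ((n : ℝ) - 1 / 2))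
      = Real.cos (r * Real.sin θ) * (Real.cos θ * (Real.cos θ ^ 2) ^ ((n : ℝ) - 1 / 2)) := by ring
    _ = _ := by rw [key]

/-- Bessel function of the first kind of integer order, via the Poisson integral
representation. -/
noncomputable def besselJ (n : ℕ) (r : ℝ) : ℝ :=
  r ^ n / (2 ^ n * Real.Gamma ((n : ℝ) + 1 / 2) * Real.sqrt Real.pi) *
    ∫ t in (-1 : ℝ)..1, Real.cos (r * t) * (1 - t ^ 2) ^ ((n : ℝ) - 1 / 2)

lemma besselJ0_eq (r : ℝ) :
    besselJ 0 r = π⁻¹ * ∫ θ in (-(π/2))..(π/2), Real.cos (r * Real.sin θ) := by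
  rw [besselJ, chgvar]
  have : Real.sqrt π * Real.sqrt π = π := Real.mul_self_sqrt pi_pos.le
  simp only [pow_zero, Nat.cast_zero, zero_add, Real.Gamma_one_half_eq, mul_zero]
  rw [one_mul, this]
  simp

lemma besselJ1_eq (r : ℝ) :
    besselJ 1 r = r * π⁻¹ * ∫ θ in (-(π/2))..(π/2),
      Real.cos (r * Real.sin θ) * Real.cos θ ^ 2 := by
  rw [besselJ, chgvar]
  have hG : Real.Gamma ((1 : ℕ) + 1 / 2) = Real.sqrt π / 2 := by
    have h := Real.Gamma_add_one (s := 1/2) (by norm_num)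
    rw [show ((1:ℕ) : ℝ) + 1/2 = 1/2 + 1 by norm_num, h, Real.Gamma_one_half_eq]
    ring
  rw [hG]
  have : Real.sqrt π * Real.sqrt π = π := Real.mul_self_sqrt pi_pos.le
  field_simp
  rw [Real.sq_sqrt pi_pos.le]

lemma hasDerivAt_G (r : ℝ) :
    HasDerivAt (fun x : ℝ => ∫ θ in (-(π/2))..(π/2), Real.cos (x * Real.sin θ))
      (∫ θ in (-(π/2))..(π/2), -Real.sin θ * Real.sin (r * Real.sin θ)) r := by
  have h := intervalIntegral.hasDerivAt_integral_of_dominated_loc_of_deriv_le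
    (F := fun x θ => Real.cos (x * Real.sin θ))
    (F' := fun x θ => -Real.sin θ * Real.sin (x * Real.sin θ))
    (μ := volume) (x₀ := r) (a := -(π/2)) (b := π/2) (bound := fun _ => 1) (s := Metric.ball r 1) (Metric.ball_mem_nhds r one_pos)
    ?_ ?_ ?_ ?_ ?_ ?_
  · exact h.2
  · filter_upwards with x
    exact (Real.continuous_cos.comp (continuous_const.mul Real.continuous_sin)).aestronglyMeasurable
  · exact (Real.continuous_cos.comp (continuous_const.mul Real.continuous_sin)).intervalIntegrable _ _
  · exact ((Real.continuous_sin.neg).mul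
      (Real.continuous_sin.comp (continuous_const.mul Real.continuous_sin))).aestronglyMeasurable
  · filter_upwards with θ _ x _
    calc ‖-Real.sin θ * Real.sin (x * Real.sin θ)‖
        = |Real.sin θ| * |Real.sin (x * Real.sin θ)| := by
          rw [norm_mul, norm_neg, Real.norm_eq_abs, Real.norm_eq_abs]
      _ ≤ 1 * 1 := by
          apply mul_le_mul (Real.abs_sin_le_one _) (Real.abs_sin_le_one _) (abs_nonneg _) zero_le_one
      _ = 1 := one_mul 1
  · exact intervalIntegrable_const
  · filter_upwards with θ _ x _
    have h1 : HasDerivAt (fun x : ℝ => x * Real.sin θ) (Real.sin θ) x := hasDerivAt_mul_const _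
    have := (Real.hasDerivAt_cos (x * Real.sin θ)).comp x h1
    exact this.congr_deriv (by ring)

lemma ibp (r : ℝ) :
    (∫ θ in (-(π/2))..(π/2), -Real.sin θ * Real.sin (r * Real.sin θ)) =
    -(r * ∫ θ in (-(π/2))..(π/2), Real.cos (r * Real.sin θ) * Real.cos θ ^ 2) := by
  have hderiv : ∀ θ ∈ Set.uIcc (-(π/2)) (π/2),
      HasDerivAt (fun θ => Real.cos θ * Real.sin (r * Real.sin θ))
        (-Real.sin θ * Real.sin (r * Real.sin θ) +
          r * (Real.cos (r * Real.sin θ) * Real.cos θ ^ 2)) θ := by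
    intro θ _
    have h1 : HasDerivAt (fun θ : ℝ => r * Real.sin θ) (r * Real.cos θ) θ :=
      (Real.hasDerivAt_sin θ).const_mul r
    have h2 : HasDerivAt (fun θ : ℝ => Real.sin (r * Real.sin θ))
        (Real.cos (r * Real.sin θ) * (r * Real.cos θ)) θ :=
      by have := (Real.hasDerivAt_sin (r * Real.sin θ)).comp θ h1; exact this
    have := (Real.hasDerivAt_cos θ).mul h2
    exact this.congr_deriv (by ring)
  have hint : IntervalIntegrable (fun θ => -Real.sin θ * Real.sin (r * Real.sin θ) +
      r * (Real.cos (r * Real.sin θ) * Real.cos θ ^ 2)) volume (-(π/2)) (π/2) := by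
    apply Continuous.intervalIntegrable
    fun_prop
  have key := intervalIntegral.integral_eq_sub_of_hasDerivAt hderiv hint
  simp only [Real.cos_pi_div_two, Real.cos_neg] at key
  rw [zero_mul, zero_mul, sub_zero] at key
  have hA : IntervalIntegrable (fun θ => -Real.sin θ * Real.sin (r * Real.sin θ))
      volume (-(π/2)) (π/2) := by apply Continuous.intervalIntegrable; fun_prop
  have hB : IntervalIntegrable (fun θ => r * (Real.cos (r * Real.sin θ) * Real.cos θ ^ 2))
      volume (-(π/2)) (π/2) := by apply Continuous.intervalIntegrable; fun_prop
  rw [intervalIntegral.integral_add hA hB, intervalIntegral.integral_const_mul] at key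
  linarith [key]

lemma deriv_besselJ0 (r : ℝ) : deriv (besselJ 0) r = -besselJ 1 r := by
  have hfun : besselJ 0 = fun x : ℝ =>
      π⁻¹ * ∫ θ in (-(π/2))..(π/2), Real.cos (x * Real.sin θ) := funext besselJ0_eq
  have hd := (hasDerivAt_G r).const_mul π⁻¹
  rw [← hfun] at hd
  rw [hd.deriv, ibp, besselJ1_eq]
  ring

lemma Dpos {b γ : ℝ} (hb : b ∈ Set.Ioo (0 : ℝ) 1) (hγ : γ ∈ Set.Ioc (0 : ℝ) 1) :
    0 < b * Real.log b * Real.sqrt γ * besselJ 1 (Real.sqrt γ * b) +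
        besselJ 0 (Real.sqrt γ * b) := by
  obtain ⟨hb0, hb1⟩ := hb
  obtain ⟨hγ0, hγ1⟩ := hγ
  set x := Real.sqrt γ * b with hxdef
  have hsg : Real.sqrt γ * Real.sqrt γ = γ := Real.mul_self_sqrt hγ0.le
  have hs1 : Real.sqrt γ ≤ 1 := by
    rw [show (1:ℝ) = Real.sqrt 1 by simp]; exact Real.sqrt_le_sqrt hγ1
  have hs0 : 0 < Real.sqrt γ := Real.sqrt_pos.mpr hγ0
  have hx0 : 0 < x := mul_pos hs0 hb0
  have hx1 : x < 1 := by
    calc x = Real.sqrt γ * b := rfl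
      _ ≤ 1 * b := by apply mul_le_mul_of_nonneg_right hs1 hb0.le
      _ = b := one_mul b
      _ < 1 := hb1
  have hL : Real.log b < 0 := Real.log_neg hb0 hb1
  have hLb : 1 - 1/b ≤ Real.log b := by
    have h := Real.log_le_sub_one_of_pos (show (0:ℝ) < 1/b by positivity)
    rw [one_div, Real.log_inv] at h
    have : -Real.log b ≤ 1/b - 1 := by rw [one_div]; linarith
    linarith
  -- pointwise positivity of the combined integrand
  have hpt : ∀ θ : ℝ, 0 < Real.cos (x * Real.sin θ) +
      γ * b ^ 2 * Real.log b * (Real.cos (x * Real.sin θ) * Real.cos θ ^ 2) := by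
    intro θ
    have hcx : 0 < Real.cos (x * Real.sin θ) := by
      apply Real.cos_pos_of_mem_Ioo
      have habs : |x * Real.sin θ| < 1 := by
        rw [abs_mul]
        calc |x| * |Real.sin θ| ≤ |x| * 1 :=
              mul_le_mul_of_nonneg_left (Real.abs_sin_le_one θ) (abs_nonneg x)
          _ = x := by rw [mul_one, abs_of_pos hx0]
          _ < 1 := hx1
      have h2 : (1:ℝ) < π/2 := by linarith [Real.pi_gt_three]
      constructor
      · linarith [abs_lt.mp habs]
      · linarith [abs_lt.mp habs]
    have hc0 : (0:ℝ) ≤ Real.cos θ ^ 2 := sq_nonneg _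
    have hc1 : Real.cos θ ^ 2 ≤ 1 := by
      have := Real.abs_cos_le_one θ
      nlinarith [abs_nonneg (Real.cos θ), sq_abs (Real.cos θ)]
    have hbL : b - 1 ≤ b * Real.log b := by
      have h := mul_le_mul_of_nonneg_left hLb hb0.le
      have hb' : b * (1 - 1/b) = b - 1 := by field_simp
      linarith
    have hb2L : b^2 - b ≤ b^2 * Real.log b := by nlinarith [mul_le_mul_of_nonneg_left hbL hb0.le]
    have hcoef : -1 < b^2 * Real.log b := by nlinarith
    have hK : b^2 * Real.log b ≤ 0 := by nlinarith
    have hone : γ * Real.cos θ ^ 2 ≤ 1 := mul_le_one₀ hγ1 hc0 hc1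
    have h4 := mul_le_mul_of_nonpos_right hone hK
    have hfac : 0 < 1 + γ * b ^ 2 * Real.log b * Real.cos θ ^ 2 := by nlinarith [h4, hcoef]
    nlinarith [mul_pos hcx hfac]
  have hint1 : IntervalIntegrable (fun θ => Real.cos (x * Real.sin θ)) volume (-(π/2)) (π/2) := by
    apply Continuous.intervalIntegrable; fun_prop
  have hint2 : IntervalIntegrable (fun θ => γ * b ^ 2 * Real.log b *
      (Real.cos (x * Real.sin θ) * Real.cos θ ^ 2)) volume (-(π/2)) (π/2) := by
    apply Continuous.intervalIntegrable; fun_prop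
  have key : 0 < ∫ θ in (-(π/2))..(π/2), (Real.cos (x * Real.sin θ) +
      γ * b ^ 2 * Real.log b * (Real.cos (x * Real.sin θ) * Real.cos θ ^ 2)) := by
    apply intervalIntegral_pos_of_pos (hint1.add hint2) hpt
    linarith [pi_pos]
  rw [intervalIntegral.integral_add hint1 hint2, intervalIntegral.integral_const_mul] at key
  rw [besselJ0_eq, besselJ1_eq]
  set I0 := ∫ θ in (-(π/2))..(π/2), Real.cos (x * Real.sin θ)
  set I1 := ∫ θ in (-(π/2))..(π/2), Real.cos (x * Real.sin θ) * Real.cos θ ^ 2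
  have heq : b * Real.log b * Real.sqrt γ * (x * π⁻¹ * I1) + π⁻¹ * I0
      = π⁻¹ * (I0 + γ * b ^ 2 * Real.log b * I1) := by
    rw [hxdef, show b * Real.log b * Real.sqrt γ * (Real.sqrt γ * b * π⁻¹ * I1)
      = Real.sqrt γ * Real.sqrt γ * (b ^ 2 * Real.log b * π⁻¹ * I1) by ring, hsg]
    ring
  rw [heq]
  exact mul_pos (inv_pos.mpr pi_pos) key

/-- The zeroth eigenvalue of the Dirichlet-to-Neumann map for the one-step radial
potential `q = γ χ_{(0,b)}(|x|)` on the unit disk. -/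
noncomputable def c₀ (b γ : ℝ) : ℝ :=
  -(b * Real.sqrt γ * besselJ 1 (Real.sqrt γ * b)) /
    (b * Real.log b * Real.sqrt γ * besselJ 1 (Real.sqrt γ * b) + besselJ 0 (Real.sqrt γ * b))

theorem dtn_zeroth_eigenvalue (b γ : ℝ) (hb : b ∈ Set.Ioo (0 : ℝ) 1)
    (hγ : γ ∈ Set.Ioc (0 : ℝ) 1) :
    0 < b * Real.log b * Real.sqrt γ * besselJ 1 (Real.sqrt γ * b) +
        besselJ 0 (Real.sqrt γ * b) ∧
      ∀ A₀ C₀ : ℝ,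
        A₀ * besselJ 0 (Real.sqrt γ * b) = 1 + C₀ * Real.log b →
        A₀ * Real.sqrt γ * deriv (besselJ 0) (Real.sqrt γ * b) = C₀ / b →
        C₀ = -(b * Real.sqrt γ * besselJ 1 (Real.sqrt γ * b)) /
          (b * Real.log b * Real.sqrt γ * besselJ 1 (Real.sqrt γ * b) +
            besselJ 0 (Real.sqrt γ * b)) ∧
        c₀ b γ = -(b * Real.sqrt γ * besselJ 1 (Real.sqrt γ * b)) /
          (b * Real.log b * Real.sqrt γ * besselJ 1 (Real.sqrt γ * b) +
            besselJ 0 (Real.sqrt γ * b)) := by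
  have hD := Dpos hb hγ
  refine ⟨hD, fun A₀ C₀ h1 h2 => ?_⟩
  have hDne : b * Real.log b * Real.sqrt γ * besselJ 1 (Real.sqrt γ * b) +
      besselJ 0 (Real.sqrt γ * b) ≠ 0 := hD.ne'
  rw [deriv_besselJ0, eq_div_iff hb.1.ne'] at h2
  -- h2 : A₀ * √γ * -besselJ 1 (√γ*b) * b = C₀
  have hA : A₀ * (b * Real.log b * Real.sqrt γ * besselJ 1 (Real.sqrt γ * b) +
      besselJ 0 (Real.sqrt γ * b)) = 1 := by
    linear_combination h1 - Real.log b * h2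
  refine ⟨?_, rfl⟩
  rw [eq_div_iff hDne]
  linear_combination (-(b * Real.log b * Real.sqrt γ * besselJ 1 (Real.sqrt γ * b) +
      besselJ 0 (Real.sqrt γ * b))) * h2 - (b * Real.sqrt γ * besselJ 1 (Real.sqrt γ * b)) * hA
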